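/- arXiv:2009.06455 — 2 statements merged into one kernel-verified Lean document; each statement's English description precedes it below -/
import Mathlib

section
/- The function w(M,N) = (1/(2π))(L(MN,Z) - L(M,NZ) - L(N,Z)) is independent of Z and takes integer values, for all M, N in Sp(g,ℝ). -/
open Matrix Complex

noncomputable section

/-- The space of `2g × 2g` real matrices (symplectic candidates). -/
abbrev SpMat (g : ℕ) := Matrix (Fin g ⊕ Fin g) (Fin g ⊕ Fin g) ℝ

/-- The Siegel upper half plane of genus `g`: symmetric complex matrices with
positive definite imaginary part. -/
def SiegelUHP (g : ℕ) : Set (Matrix (Fin g) (Fin g) ℂ) :=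
  {Z | Z.IsSymm ∧ Matrix.PosDef (Matrix.of fun i j => (Z i j).im)}

/-- Coercion of a real matrix to a complex matrix. -/
def cmat {g : ℕ} (A : Matrix (Fin g) (Fin g) ℝ) : Matrix (Fin g) (Fin g) ℂ :=
  A.map (fun x => (x : ℂ))

/-- The automorphy factor `J(M,Z) = det (C Z + D)`. -/
def Jfac {g : ℕ} (M : SpMat g) (Z : Matrix (Fin g) (Fin g) ℂ) : ℂ :=
  (cmat M.toBlocks₂₁ * Z + cmat M.toBlocks₂₂).det

/-- The action `M⟨Z⟩ = (A Z + B)(C Z + D)⁻¹` on the Siegel upper half plane. -/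
def spAct {g : ℕ} (M : SpMat g) (Z : Matrix (Fin g) (Fin g) ℂ) :
    Matrix (Fin g) (Fin g) ℂ :=
  (cmat M.toBlocks₁₁ * Z + cmat M.toBlocks₁₂) *
    (cmat M.toBlocks₂₁ * Z + cmat M.toBlocks₂₂)⁻¹

/-- The base point `i·E` of the Siegel upper half plane. -/
def iE (g : ℕ) : Matrix (Fin g) (Fin g) ℂ := Complex.I • 1

/-- `L` is a continuous branch of `arg J(M, ·)` on the Siegel upper half plane,
normalized to the principal value at `Z = iE`. -/
def IsArgBranch (g : ℕ) (L : SpMat g → Matrix (Fin g) (Fin g) ℂ → ℝ) : Prop :=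
  (∀ M ∈ Matrix.symplecticGroup (Fin g) ℝ, ContinuousOn (L M) (SiegelUHP g)) ∧
  (∀ M ∈ Matrix.symplecticGroup (Fin g) ℝ, ∀ Z ∈ SiegelUHP g,
      ((‖Jfac M Z‖ : ℝ) : ℂ) * Complex.exp (Complex.I * (L M Z)) = Jfac M Z) ∧
  (∀ M ∈ Matrix.symplecticGroup (Fin g) ℝ, L M (iE g) = Complex.arg (Jfac M (iE g)))

/-- The cocycle `w(M,N) = (1/2π)(L(MN,Z) - L(M,NZ) - L(N,Z))`, evaluated at the
base point `Z = iE` (it is independent of `Z`). -/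
def wcoc {g : ℕ} (L : SpMat g → Matrix (Fin g) (Fin g) ℂ → ℝ) (M N : SpMat g) : ℝ :=
  (L (M * N) (iE g) - L M (spAct N (iE g)) - L N (iE g)) / (2 * Real.pi)

variable {g : ℕ}

/-- entrywise complex conjugation -/
def mconj (Z : Matrix (Fin g) (Fin g) ℂ) : Matrix (Fin g) (Fin g) ℂ :=
  Z.map (starRingEnd ℂ)

/-- imaginary part as a real matrix -/
def imPart (Z : Matrix (Fin g) (Fin g) ℂ) : Matrix (Fin g) (Fin g) ℝ :=
  Matrix.of fun i j => (Z i j).im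

lemma cmat_mul (A B : Matrix (Fin g) (Fin g) ℝ) : cmat (A * B) = cmat A * cmat B := by
  ext i j; simp [cmat, Matrix.mul_apply, Matrix.map_apply]

lemma cmat_add (A B : Matrix (Fin g) (Fin g) ℝ) : cmat (A + B) = cmat A + cmat B := by
  ext i j; simp [cmat]

lemma cmat_transpose (A : Matrix (Fin g) (Fin g) ℝ) : cmat Aᵀ = (cmat A)ᵀ := by
  ext i j; simp [cmat]

lemma cmat_one : cmat (1 : Matrix (Fin g) (Fin g) ℝ) = 1 := by
  ext i j; simp [cmat, Matrix.one_apply]; split <;> simp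

lemma mconj_mul (A B : Matrix (Fin g) (Fin g) ℂ) : mconj (A * B) = mconj A * mconj B :=
  Matrix.map_mul (f := starRingEnd ℂ)

lemma mconj_add (A B : Matrix (Fin g) (Fin g) ℂ) : mconj (A + B) = mconj A + mconj B := by
  ext i j; simp [mconj]

lemma mconj_cmat (A : Matrix (Fin g) (Fin g) ℝ) : mconj (cmat A) = cmat A := by
  ext i j; simp [mconj, cmat]

lemma mconj_transpose (A : Matrix (Fin g) (Fin g) ℂ) : mconj Aᵀ = (mconj A)ᵀ := by
  ext i j; simp [mconj]

lemma sub_mconj (Z : Matrix (Fin g) (Fin g) ℂ) :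
    Z - mconj Z = (2 * Complex.I) • cmat (imPart Z) := by
  ext i j
  simp only [Matrix.sub_apply, mconj, Matrix.map_apply, Matrix.smul_apply, cmat, imPart,
    Matrix.of_apply, smul_eq_mul]
  rw [Complex.sub_conj]
  push_cast; ring

/-- symplectic relations for the complexified blocks -/
lemma sympl_rel {M : SpMat g} (hM : M ∈ Matrix.symplecticGroup (Fin g) ℝ) :
    (cmat M.toBlocks₁₁)ᵀ * cmat M.toBlocks₂₁ = (cmat M.toBlocks₂₁)ᵀ * cmat M.toBlocks₁₁ ∧
    (cmat M.toBlocks₂₂)ᵀ * cmat M.toBlocks₁₂ = (cmat M.toBlocks₁₂)ᵀ * cmat M.toBlocks₂₂ ∧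
    (cmat M.toBlocks₁₁)ᵀ * cmat M.toBlocks₂₂ = 1 + (cmat M.toBlocks₂₁)ᵀ * cmat M.toBlocks₁₂ ∧
    (cmat M.toBlocks₂₂)ᵀ * cmat M.toBlocks₁₁ = 1 + (cmat M.toBlocks₁₂)ᵀ * cmat M.toBlocks₂₁ := by
  rw [SymplecticGroup.mem_iff'] at hM
  set A := M.toBlocks₁₁; set B := M.toBlocks₁₂; set C := M.toBlocks₂₁; set D := M.toBlocks₂₂
  rw [← Matrix.fromBlocks_toBlocks M] at hM
  rw [Matrix.fromBlocks_transpose, Matrix.J, Matrix.fromBlocks_multiply,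
    Matrix.fromBlocks_multiply] at hM
  simp only [Matrix.mul_zero, Matrix.mul_one, Matrix.mul_neg, zero_add, add_zero,
    Matrix.zero_mul, Matrix.neg_mul] at hM
  have h11 := congrArg Matrix.toBlocks₁₁ hM
  have h12 := congrArg Matrix.toBlocks₁₂ hM
  have h21 := congrArg Matrix.toBlocks₂₁ hM
  have h22 := congrArg Matrix.toBlocks₂₂ hM
  simp only [Matrix.toBlocks_fromBlocks₁₁, Matrix.toBlocks_fromBlocks₁₂,
    Matrix.toBlocks_fromBlocks₂₁, Matrix.toBlocks_fromBlocks₂₂] at h11 h12 h21 h22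
  have e1 : Aᵀ * C = Cᵀ * A := by
    have := add_neg_eq_zero.mp h11; exact this.symm
  have e2 : Dᵀ * B = Bᵀ * D := by
    have := add_neg_eq_zero.mp h22; exact this
  have e3 : Aᵀ * D = 1 + Cᵀ * B := by
    have h0 : Cᵀ * B - Aᵀ * D = -1 := by rw [sub_eq_add_neg]; exact h12
    have h : Aᵀ * D - Cᵀ * B = 1 := by
      have := congrArg Neg.neg h0
      simpa [neg_sub] using this
    rw [← h]; abel
  have e4 : Dᵀ * A = 1 + Bᵀ * C := by
    have h : Dᵀ * A - Bᵀ * C = 1 := by rw [sub_eq_add_neg]; exact h21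
    rw [← h]; abel
  refine ⟨?_, ?_, ?_, ?_⟩
  · rw [← cmat_transpose, ← cmat_mul, ← cmat_transpose, ← cmat_mul, e1]
  · rw [← cmat_transpose, ← cmat_mul, ← cmat_transpose, ← cmat_mul, e2]
  · rw [← cmat_transpose, ← cmat_mul, ← cmat_transpose, ← cmat_mul, ← cmat_one, ← cmat_add, e3]
  · rw [← cmat_transpose, ← cmat_mul, ← cmat_transpose, ← cmat_mul, ← cmat_one, ← cmat_add, e4]

/-- master identity -/
lemma master {A B C D : Matrix (Fin g) (Fin g) ℂ}
    (r1 : Aᵀ * C = Cᵀ * A) (r2 : Dᵀ * B = Bᵀ * D)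
    (r3 : Aᵀ * D = 1 + Cᵀ * B) (r4 : Dᵀ * A = 1 + Bᵀ * C)
    (Z W : Matrix (Fin g) (Fin g) ℂ) :
    (A * W + B)ᵀ * (C * Z + D) - (C * W + D)ᵀ * (A * Z + B) = Wᵀ - Z := by
  have expand : (A * W + B)ᵀ * (C * Z + D) - (C * W + D)ᵀ * (A * Z + B)
      = Wᵀ * (Aᵀ * C) * Z + Wᵀ * (Aᵀ * D) + Bᵀ * C * Z + Bᵀ * D
        - (Wᵀ * (Cᵀ * A) * Z + Wᵀ * (Cᵀ * B) + Dᵀ * A * Z + Dᵀ * B) := by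
    simp only [Matrix.transpose_add, Matrix.transpose_mul]
    noncomm_ring
  rw [expand, r1, r2, r3, r4]
  noncomm_ring

lemma mconj_mulVec (A : Matrix (Fin g) (Fin g) ℂ) (v : Fin g → ℂ) :
    mconj A *ᵥ star v = star (A *ᵥ v) := by
  ext i
  simp only [Matrix.mulVec, dotProduct, mconj, Matrix.map_apply, Pi.star_apply]
  rw [show star ((fun j => A i j * v j) |> Finset.univ.sum) = _ from star_sum _ _]
  · simp [mul_comm]

lemma cmat_mulVec (A : Matrix (Fin g) (Fin g) ℝ) (v : Fin g → ℝ) :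
    cmat A *ᵥ (fun i => (v i : ℂ)) = fun i => ((A *ᵥ v) i : ℂ) := by
  ext i
  simp [cmat, Matrix.mulVec, dotProduct]

lemma cmat_dotProduct (u v : Fin g → ℝ) :
    (fun i => (u i : ℂ)) ⬝ᵥ (fun i => (v i : ℂ)) = ((u ⬝ᵥ v : ℝ) : ℂ) := by
  simp [dotProduct]

lemma star_cast (v : Fin g → ℝ) : star (fun i => (v i : ℂ)) = fun i => (v i : ℂ) := by
  ext i; simp

/-- the complexified quadratic form of a positive definite real symmetric matrix -/
lemma cmat_quad_pos {Y : Matrix (Fin g) (Fin g) ℝ} (hY : Y.PosDef) (x : Fin g → ℂ)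
    (hx : x ≠ 0) : ∃ r : ℝ, 0 < r ∧ star x ⬝ᵥ (cmat Y *ᵥ x) = (r : ℂ) := by
  have hsymm : Yᵀ = Y := hY.1
  set xr : Fin g → ℝ := fun i => (x i).re with hxr
  set xi : Fin g → ℝ := fun i => (x i).im with hxi
  have hxdec : x = (fun i => (xr i : ℂ)) + Complex.I • (fun i => (xi i : ℂ)) := by
    ext i
    simp [hxr, hxi, Complex.ext_iff, mul_comm]
  have hstar : star x = (fun i => (xr i : ℂ)) - Complex.I • (fun i => (xi i : ℂ)) := by
    ext i
    simp [hxr, hxi, Complex.ext_iff, mul_comm]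
  have key : star x ⬝ᵥ (cmat Y *ᵥ x) = ((xr ⬝ᵥ (Y *ᵥ xr) + xi ⬝ᵥ (Y *ᵥ xi) : ℝ) : ℂ) := by
    rw [hstar]; nth_rewrite 1 [hxdec]
    rw [Matrix.mulVec_add, Matrix.mulVec_smul]
    rw [sub_dotProduct, dotProduct_add, dotProduct_add,
      smul_dotProduct, smul_dotProduct, dotProduct_smul,
      dotProduct_smul]
    rw [cmat_mulVec, cmat_mulVec, cmat_dotProduct, cmat_dotProduct, cmat_dotProduct,
      cmat_dotProduct]
    have hcross : xi ⬝ᵥ (Y *ᵥ xr) = xr ⬝ᵥ (Y *ᵥ xi) := by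
      nth_rewrite 1 [← hsymm]
      rw [← Matrix.vecMul_transpose, Matrix.transpose_transpose,
        dotProduct_comm, ← Matrix.dotProduct_mulVec]
    rw [hcross]
    push_cast
    simp only [smul_eq_mul]
    linear_combination (-1 : ℂ) * ((xi ⬝ᵥ Y *ᵥ xi : ℝ) : ℂ) * Complex.I_sq
  have hpos : 0 < xr ⬝ᵥ (Y *ᵥ xr) + xi ⬝ᵥ (Y *ᵥ xi) := by
    have hor : xr ≠ 0 ∨ xi ≠ 0 := by
      by_contra h
      push_neg at h
      apply hx
      ext i
      have h1 : xr i = 0 := by rw [h.1]; rfl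
      have h2 : xi i = 0 := by rw [h.2]; rfl
      simpa [Complex.ext_iff, hxr, hxi] using ⟨h1, h2⟩
    rcases hor with h | h
    · have := hY.dotProduct_mulVec_pos h
      have h2 := hY.posSemidef.dotProduct_mulVec_nonneg xi
      simp only [dotProduct] at *
      positivity
    · have := hY.dotProduct_mulVec_pos h
      have h2 := hY.posSemidef.dotProduct_mulVec_nonneg xr
      simp only [dotProduct] at *
      positivity
  exact ⟨_, hpos, key⟩

lemma det_CZD_ne_zero {M : SpMat g} (hM : M ∈ Matrix.symplecticGroup (Fin g) ℝ)
    {Z : Matrix (Fin g) (Fin g) ℂ} (hZ : Z ∈ SiegelUHP g) :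
    (cmat M.toBlocks₂₁ * Z + cmat M.toBlocks₂₂).det ≠ 0 := by
  obtain ⟨r1, r2, r3, r4⟩ := sympl_rel hM
  set A := cmat M.toBlocks₁₁; set B := cmat M.toBlocks₁₂
  set C := cmat M.toBlocks₂₁; set D := cmat M.toBlocks₂₂
  intro h
  obtain ⟨v, hv0, hv⟩ := (Matrix.exists_mulVec_eq_zero_iff).mpr h
  have hmaster := master r1 r2 r3 r4 Z (mconj Z)
  have hWt : (mconj Z)ᵀ = mconj Z := by rw [← mconj_transpose, hZ.1]
  have hsub : (mconj Z)ᵀ - Z = -((2 * Complex.I) • cmat (imPart Z)) := by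
    rw [hWt, ← neg_sub, sub_mconj]
  rw [hsub] at hmaster
  have happ := congrArg (fun P => star v ⬝ᵥ (P *ᵥ v)) hmaster
  simp only [Matrix.sub_mulVec, dotProduct_sub] at happ
  have hQconj : (C * mconj Z + D) *ᵥ star v = 0 := by
    have : C * mconj Z + D = mconj (C * Z + D) := by
      rw [mconj_add, mconj_mul, mconj_cmat, mconj_cmat]
    rw [this, mconj_mulVec, hv]
    simp
  have hterm1 : star v ⬝ᵥ ((A * mconj Z + B)ᵀ * (C * Z + D)) *ᵥ v = 0 := by
    rw [← Matrix.mulVec_mulVec, hv, Matrix.mulVec_zero, dotProduct_zero]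
  have hterm2 : star v ⬝ᵥ ((C * mconj Z + D)ᵀ * (A * Z + B)) *ᵥ v = 0 := by
    rw [← Matrix.mulVec_mulVec, Matrix.dotProduct_mulVec, Matrix.vecMul_transpose,
      hQconj, zero_dotProduct]
  rw [hterm1, hterm2] at happ
  obtain ⟨r, hr, hquad⟩ := cmat_quad_pos hZ.2 v hv0
  have hquad' : star v ⬝ᵥ cmat (imPart Z) *ᵥ v = (r : ℂ) := hquad
  rw [Matrix.neg_mulVec, dotProduct_neg, Matrix.smul_mulVec,
    dotProduct_smul, hquad'] at happ
  have h0 : (2 * Complex.I) • (r : ℂ) = 0 := by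
    rw [← neg_eq_zero, ← happ]; ring
  rw [smul_eq_mul] at h0
  have him := congrArg Complex.im h0
  simp [Complex.mul_im, Complex.mul_re] at him
  exact absurd him (ne_of_gt hr)
/-- symmetry of the matrix `(AZ+B)(CZ+D)⁻¹` -/
lemma sympl_symm_of {A B C D : Matrix (Fin g) (Fin g) ℂ}
    (r1 : Aᵀ * C = Cᵀ * A) (r2 : Dᵀ * B = Bᵀ * D)
    (r3 : Aᵀ * D = 1 + Cᵀ * B) (r4 : Dᵀ * A = 1 + Bᵀ * C)
    {Z : Matrix (Fin g) (Fin g) ℂ} (hZs : Zᵀ = Z) (hdet : IsUnit (C * Z + D).det) :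
    ((A * Z + B) * (C * Z + D)⁻¹)ᵀ = (A * Z + B) * (C * Z + D)⁻¹ := by
  set Q := C * Z + D
  set P := A * Z + B
  have hPQ : Pᵀ * Q = Qᵀ * P := by
    have hm := master r1 r2 r3 r4 Z Z
    have : Zᵀ - Z = 0 := by rw [hZs]; simp
    rw [this] at hm
    exact sub_eq_zero.mp hm
  have hQT : IsUnit Qᵀ.det := by rwa [Matrix.det_transpose]
  have hcanc : ∀ X Y : Matrix (Fin g) (Fin g) ℂ, Qᵀ * X = Qᵀ * Y → X = Y := by
    intro X Y h
    have h2 := congrArg (fun W => (Qᵀ)⁻¹ * W) h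
    simpa [← Matrix.mul_assoc, Matrix.nonsing_inv_mul _ hQT] using h2
  apply hcanc
  rw [Matrix.transpose_mul, ← Matrix.mul_assoc, Matrix.transpose_nonsing_inv,
    Matrix.mul_nonsing_inv _ hQT, Matrix.one_mul, ← Matrix.mul_assoc, ← hPQ,
    Matrix.mul_assoc, Matrix.mul_nonsing_inv _ hdet, Matrix.mul_one]

lemma spAct_mem {M : SpMat g} (hM : M ∈ Matrix.symplecticGroup (Fin g) ℝ)
    {Z : Matrix (Fin g) (Fin g) ℂ} (hZ : Z ∈ SiegelUHP g) :
    spAct M Z ∈ SiegelUHP g := by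
  obtain ⟨r1, r2, r3, r4⟩ := sympl_rel hM
  set A := cmat M.toBlocks₁₁; set B := cmat M.toBlocks₁₂
  set C := cmat M.toBlocks₂₁; set D := cmat M.toBlocks₂₂
  set Q := C * Z + D with hQdef
  set P := A * Z + B with hPdef
  have hdet : IsUnit Q.det := isUnit_iff_ne_zero.mpr (det_CZD_ne_zero hM hZ)
  have hW : spAct M Z = P * Q⁻¹ := rfl
  have hWsymm : (P * Q⁻¹)ᵀ = P * Q⁻¹ := sympl_symm_of r1 r2 r3 r4 hZ.1 hdet
  set Zb := mconj Z with hZbdef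
  have hZbs : Zbᵀ = Zb := by rw [hZbdef, ← mconj_transpose, hZ.1]
  set Qb := C * Zb + D with hQbdef
  set Pb := A * Zb + B with hPbdef
  have hQbconj : mconj Q = Qb := by rw [hQdef, mconj_add, mconj_mul, mconj_cmat, mconj_cmat]
  have hPbconj : mconj P = Pb := by rw [hPdef, mconj_add, mconj_mul, mconj_cmat, mconj_cmat]
  have hdetb : IsUnit Qb.det := by
    rw [← hQbconj]
    rw [isUnit_iff_ne_zero]
    have : (mconj Q).det = starRingEnd ℂ Q.det := (RingHom.map_det (starRingEnd ℂ) Q).symm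
    rw [this]
    simpa using hdet.ne_zero
  have hQinvconj : mconj Q⁻¹ = Qb⁻¹ := by
    refine (Matrix.inv_eq_left_inv ?_).symm
    rw [← hQbconj, ← mconj_mul, Matrix.nonsing_inv_mul _ hdet]
    ext i j; simp [mconj, Matrix.one_apply]
  have hWbconj : mconj (P * Q⁻¹) = Pb * Qb⁻¹ := by
    rw [mconj_mul, hPbconj, hQinvconj]
  have hWbsymm : (Pb * Qb⁻¹)ᵀ = Pb * Qb⁻¹ := sympl_symm_of r1 r2 r3 r4 hZbs hdetb
  -- the sandwich identity
  have hmb := master r1 r2 r3 r4 Z Zb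
  have hZbZ : Zbᵀ - Z = -((2 * Complex.I) • cmat (imPart Z)) := by
    rw [hZbs, hZbdef, ← neg_sub, sub_mconj]
  rw [hZbZ] at hmb
  have hsand : Qbᵀ * ((P * Q⁻¹) - (Pb * Qb⁻¹)) * Q = (2 * Complex.I) • cmat (imPart Z) := by
    have h1 : Qbᵀ * (P * Q⁻¹) * Q = Qbᵀ * P := by
      rw [Matrix.mul_assoc, Matrix.mul_assoc, Matrix.nonsing_inv_mul _ hdet, Matrix.mul_one]
    have h2 : Qbᵀ * (Pb * Qb⁻¹) * Q = Pbᵀ * Q := by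
      have : Qbᵀ * (Pb * Qb⁻¹) = Pbᵀ := by
        have e : Qbᵀ * (Pb * Qb⁻¹) = ((Pb * Qb⁻¹)ᵀ * Qb)ᵀ := by
          rw [Matrix.transpose_mul, Matrix.transpose_transpose]
        rw [e, hWbsymm, Matrix.mul_assoc, Matrix.nonsing_inv_mul _ hdetb, Matrix.mul_one]
      rw [this]
    rw [Matrix.mul_sub, Matrix.sub_mul, h1, h2]
    have := congrArg Neg.neg hmb
    simp only [neg_sub, neg_neg] at this
    exact this
  -- solve for W - Wb
  have hsolve : (P * Q⁻¹) - (Pb * Qb⁻¹)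
      = (2 * Complex.I) • ((Qbᵀ)⁻¹ * cmat (imPart Z) * Q⁻¹) := by
    have hQbT : IsUnit (Qbᵀ).det := by rwa [Matrix.det_transpose]
    have h1 := congrArg (fun X => (Qbᵀ)⁻¹ * X * Q⁻¹) hsand
    rw [show ∀ X : Matrix (Fin g) (Fin g) ℂ, (Qbᵀ)⁻¹ * (Qbᵀ * X * Q) * Q⁻¹ = ((Qbᵀ)⁻¹ * Qbᵀ) * X * (Q * Q⁻¹) from fun X => by noncomm_ring,
      Matrix.nonsing_inv_mul _ hQbT, Matrix.mul_nonsing_inv _ hdet, Matrix.one_mul,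
      Matrix.mul_one] at h1
    rw [h1, Matrix.mul_smul, Matrix.smul_mul]
  -- identify with the imaginary part of W
  have hWim : cmat (imPart (P * Q⁻¹)) = (Qbᵀ)⁻¹ * cmat (imPart Z) * Q⁻¹ := by
    have hsub := sub_mconj (P * Q⁻¹)
    rw [hWbconj] at hsub
    rw [hsolve] at hsub
    have h2I : (2 * Complex.I) ≠ 0 := by simp [Complex.I_ne_zero]
    exact smul_right_injective _ h2I hsub.symm
  constructor
  · exact hWsymm
  · show Matrix.PosDef (Matrix.of fun i j => ((spAct M Z) i j).im)
    have hWsp : spAct M Z = P * Q⁻¹ := rfl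
    rw [hWsp]
    refine Matrix.PosDef.of_dotProduct_mulVec_pos ?_ ?_
    · show (imPart (P * Q⁻¹))ᵀ = imPart (P * Q⁻¹)
      ext i j
      simp only [imPart, Matrix.transpose_apply, Matrix.of_apply]
      rw [show (P * Q⁻¹) j i = ((P * Q⁻¹)ᵀ) i j from rfl, hWsymm]
    · intro x hx
      set xc : Fin g → ℂ := fun i => (x i : ℂ) with hxc
      have hxc0 : xc ≠ 0 := by
        intro h
        apply hx
        ext i
        have := congrFun h i
        simpa [hxc] using this
      set u := Q⁻¹ *ᵥ xc with hu
      have hu0 : u ≠ 0 := by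
        intro h
        apply hxc0
        have : Q *ᵥ u = Q *ᵥ 0 := by rw [h]
        rw [hu, Matrix.mulVec_mulVec, Matrix.mul_nonsing_inv _ hdet, Matrix.one_mulVec,
          Matrix.mulVec_zero] at this
        exact this
      obtain ⟨r, hr, hquad⟩ := cmat_quad_pos hZ.2 u hu0
      have hquad' : star u ⬝ᵥ cmat (imPart Z) *ᵥ u = (r : ℂ) := hquad
      have hbridge : ((x ⬝ᵥ (imPart (P * Q⁻¹) *ᵥ x) : ℝ) : ℂ)
          = xc ⬝ᵥ (cmat (imPart (P * Q⁻¹)) *ᵥ xc) := by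
        rw [cmat_mulVec, cmat_dotProduct]
      rw [hWim] at hbridge
      have hQbTinv : (Qbᵀ)⁻¹ = (mconj Q⁻¹)ᵀ := by
        rw [hQinvconj, Matrix.transpose_nonsing_inv]
      have hstep : xc ⬝ᵥ (((Qbᵀ)⁻¹ * cmat (imPart Z) * Q⁻¹) *ᵥ xc) = (r : ℂ) := by
        rw [← Matrix.mulVec_mulVec, ← Matrix.mulVec_mulVec, ← hu, hQbTinv,
          Matrix.dotProduct_mulVec, Matrix.vecMul_transpose]
        have : mconj Q⁻¹ *ᵥ xc = star u := by
          rw [hu, ← mconj_mulVec]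
          congr 1
          rw [star_cast]
        rw [this]
        exact hquad'
      have hfinal : x ⬝ᵥ (imPart (P * Q⁻¹) *ᵥ x) = r := by
        have := hbridge.trans hstep
        exact_mod_cast this
      show 0 < star x ⬝ᵥ (imPart (P * Q⁻¹) *ᵥ x)
      have hsx : star x = x := by ext i; simp
      rw [hsx, hfinal]
      exact hr

lemma Jfac_cocycle {M N : SpMat g} (hM : M ∈ Matrix.symplecticGroup (Fin g) ℝ)
    (hN : N ∈ Matrix.symplecticGroup (Fin g) ℝ)
    {Z : Matrix (Fin g) (Fin g) ℂ} (hZ : Z ∈ SiegelUHP g) :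
    Jfac (M * N) Z = Jfac M (spAct N Z) * Jfac N Z := by
  have hb21 : (M * N).toBlocks₂₁
      = M.toBlocks₂₁ * N.toBlocks₁₁ + M.toBlocks₂₂ * N.toBlocks₂₁ := by
    conv_lhs => rw [← Matrix.fromBlocks_toBlocks M, ← Matrix.fromBlocks_toBlocks N,
      Matrix.fromBlocks_multiply]
    simp [Matrix.toBlocks_fromBlocks₂₁]
  have hb22 : (M * N).toBlocks₂₂
      = M.toBlocks₂₁ * N.toBlocks₁₂ + M.toBlocks₂₂ * N.toBlocks₂₂ := by
    conv_lhs => rw [← Matrix.fromBlocks_toBlocks M, ← Matrix.fromBlocks_toBlocks N,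
      Matrix.fromBlocks_multiply]
    simp [Matrix.toBlocks_fromBlocks₂₂]
  have hdet : IsUnit (cmat N.toBlocks₂₁ * Z + cmat N.toBlocks₂₂).det :=
    isUnit_iff_ne_zero.mpr (det_CZD_ne_zero hN hZ)
  have hkey : cmat (M * N).toBlocks₂₁ * Z + cmat (M * N).toBlocks₂₂
      = (cmat M.toBlocks₂₁ * spAct N Z + cmat M.toBlocks₂₂)
        * (cmat N.toBlocks₂₁ * Z + cmat N.toBlocks₂₂) := by
    rw [hb21, hb22, cmat_add, cmat_add, cmat_mul, cmat_mul, cmat_mul, cmat_mul]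
    have hact : spAct N Z = (cmat N.toBlocks₁₁ * Z + cmat N.toBlocks₁₂)
        * (cmat N.toBlocks₂₁ * Z + cmat N.toBlocks₂₂)⁻¹ := rfl
    rw [hact]
    have hcanc : cmat M.toBlocks₂₁ * ((cmat N.toBlocks₁₁ * Z + cmat N.toBlocks₁₂)
          * (cmat N.toBlocks₂₁ * Z + cmat N.toBlocks₂₂)⁻¹)
          * (cmat N.toBlocks₂₁ * Z + cmat N.toBlocks₂₂)
        = cmat M.toBlocks₂₁ * (cmat N.toBlocks₁₁ * Z + cmat N.toBlocks₁₂) := by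
      rw [Matrix.mul_assoc, Matrix.mul_assoc, Matrix.nonsing_inv_mul _ hdet, Matrix.mul_one]
    conv_rhs => rw [Matrix.add_mul, hcanc]
    noncomm_ring
  show (cmat (M * N).toBlocks₂₁ * Z + cmat (M * N).toBlocks₂₂).det = _
  rw [hkey, Matrix.det_mul]
  rfl

lemma iE_mem : iE g ∈ SiegelUHP g := by
  constructor
  · show (iE g)ᵀ = iE g
    rw [iE, Matrix.transpose_smul, Matrix.transpose_one]
  · have : (Matrix.of fun i j => ((iE g) i j).im) = (1 : Matrix (Fin g) (Fin g) ℝ) := by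
      ext i j
      simp [iE, Matrix.smul_apply, Matrix.one_apply]
      split <;> simp
    rw [this]
    exact Matrix.PosDef.one

lemma siegel_convex : Convex ℝ (SiegelUHP g) := by
  intro Z₁ h₁ Z₂ h₂ a b ha hb hab
  constructor
  · show (a • Z₁ + b • Z₂)ᵀ = a • Z₁ + b • Z₂
    rw [Matrix.transpose_add, Matrix.transpose_smul, Matrix.transpose_smul, h₁.1, h₂.1]
  · have him : (Matrix.of fun i j => ((a • Z₁ + b • Z₂) i j).im)
        = a • (Matrix.of fun i j => ((Z₁ i j).im)) + b • (Matrix.of fun i j => ((Z₂ i j).im)) := by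
      ext i j
      simp [Matrix.add_apply, Matrix.smul_apply, Complex.add_im]
    rw [him]
    have hsm : ∀ (c : ℝ) (Y : Matrix (Fin g) (Fin g) ℝ), 0 < c → Y.PosDef → (c • Y).PosDef := by
      intro c Y hc hY
      refine Matrix.PosDef.of_dotProduct_mulVec_pos ?_ ?_
      · have hsymm : Yᵀ = Y := hY.1
        show (c • Y)ᴴ = c • Y
        ext i j
        have he : Y j i = Y i j := congrFun (congrFun hsymm i) j
        simp [Matrix.conjTranspose_apply, he]
      · intro x hx
        rw [Matrix.smul_mulVec, dotProduct_smul]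
        exact smul_pos hc (hY.dotProduct_mulVec_pos hx)
    rcases eq_or_lt_of_le ha with ha0 | ha0
    · have hb1 : b = 1 := by linarith
      rw [← ha0, hb1]
      simpa using h₂.2
    rcases eq_or_lt_of_le hb with hb0 | hb0
    · have ha1 : a = 1 := by linarith
      rw [← hb0, ha1]
      simpa using h₁.2
    exact ((hsm a _ ha0 h₁.2).add (hsm b _ hb0 h₂.2))

lemma spAct_continuousOn {N : SpMat g} (hN : N ∈ Matrix.symplecticGroup (Fin g) ℝ) :
    ContinuousOn (spAct N) (SiegelUHP g) := by
  have hQ : Continuous fun Z : Matrix (Fin g) (Fin g) ℂ =>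
      cmat N.toBlocks₂₁ * Z + cmat N.toBlocks₂₂ :=
    (continuous_const.matrix_mul continuous_id).add continuous_const
  have hP : Continuous fun Z : Matrix (Fin g) (Fin g) ℂ =>
      cmat N.toBlocks₁₁ * Z + cmat N.toBlocks₁₂ :=
    (continuous_const.matrix_mul continuous_id).add continuous_const
  have hdet : ContinuousOn
      (fun Z => ((cmat N.toBlocks₂₁ * Z + cmat N.toBlocks₂₂).det)⁻¹) (SiegelUHP g) :=
    ContinuousOn.inv₀ hQ.matrix_det.continuousOn (fun Z hZ => det_CZD_ne_zero hN hZ)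
  have hinv : ContinuousOn
      (fun Z => (cmat N.toBlocks₂₁ * Z + cmat N.toBlocks₂₂)⁻¹) (SiegelUHP g) := by
    have heq : ∀ Z : Matrix (Fin g) (Fin g) ℂ,
        (cmat N.toBlocks₂₁ * Z + cmat N.toBlocks₂₂)⁻¹
        = ((cmat N.toBlocks₂₁ * Z + cmat N.toBlocks₂₂).det)⁻¹
          • (cmat N.toBlocks₂₁ * Z + cmat N.toBlocks₂₂).adjugate := by
      intro Z
      rw [Matrix.inv_def, Ring.inverse_eq_inv]
    simp_rw [heq]
    exact hdet.smul hQ.matrix_adjugate.continuousOn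
  exact hP.continuousOn.mul hinv

lemma no_half (n j : ℤ) : 2 * Real.pi * n ≠ 2 * Real.pi * j + Real.pi := by
  intro h
  have hpi : Real.pi ≠ 0 := Real.pi_ne_zero
  have h2 : Real.pi * (2 * (n - j)) = Real.pi * 1 := by push_cast; linarith
  have := mul_left_cancel₀ hpi h2
  have hz : (2 * (n - j) : ℤ) = 1 := by exact_mod_cast this
  omega

/-- The function `w(M,N) = (1/2π)(L(MN,Z) - L(M,NZ) - L(N,Z))` is independent of
`Z` and takes integer values, for all `M, N ∈ Sp(g,ℝ)`. -/
theorem w_integer_and_Z_independent (g : ℕ)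
    (L : SpMat g → Matrix (Fin g) (Fin g) ℂ → ℝ) (hL : IsArgBranch g L)
    (M : SpMat g) (hM : M ∈ Matrix.symplecticGroup (Fin g) ℝ)
    (N : SpMat g) (hN : N ∈ Matrix.symplecticGroup (Fin g) ℝ) :
    ∃ k : ℤ, ∀ Z ∈ SiegelUHP g,
      L (M * N) Z - L M (spAct N Z) - L N Z = 2 * Real.pi * k := by
  obtain ⟨hLcont, hLexp, hLnorm⟩ := hL
  have hMN : M * N ∈ Matrix.symplecticGroup (Fin g) ℝ := mul_mem hM hN
  set Δ : Matrix (Fin g) (Fin g) ℂ → ℝ :=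
    fun Z => L (M * N) Z - L M (spAct N Z) - L N Z with hΔdef
  have hint : ∀ Z ∈ SiegelUHP g, ∃ n : ℤ, Δ Z = 2 * Real.pi * n := by
    intro Z hZ
    have hW := spAct_mem hN hZ
    have h1 := hLexp (M * N) hMN Z hZ
    have h2 := hLexp M hM _ hW
    have h3 := hLexp N hN Z hZ
    have j1 : Jfac (M * N) Z ≠ 0 := det_CZD_ne_zero hMN hZ
    have j2 : Jfac M (spAct N Z) ≠ 0 := det_CZD_ne_zero hM hW
    have j3 : Jfac N Z ≠ 0 := det_CZD_ne_zero hN hZ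
    have hcoc := Jfac_cocycle hM hN hZ
    set E1 := Complex.exp (Complex.I * (L (M * N) Z)) with hE1
    set E2 := Complex.exp (Complex.I * (L M (spAct N Z))) with hE2
    set E3 := Complex.exp (Complex.I * (L N Z)) with hE3
    set a1 : ℂ := ((‖Jfac (M * N) Z‖ : ℝ) : ℂ)
    set a2 : ℂ := ((‖Jfac M (spAct N Z)‖ : ℝ) : ℂ)
    set a3 : ℂ := ((‖Jfac N Z‖ : ℝ) : ℂ)
    have ha2 : a2 ≠ 0 := by simpa [a2] using j2
    have ha3 : a3 ≠ 0 := by simpa [a3] using j3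
    have hamul : a1 = a2 * a3 := by
      simp only [a1, a2, a3, hcoc, norm_mul]
      push_cast
      ring
    have hE : E1 = E2 * E3 := by
      have hJ : a1 * E1 = (a2 * E2) * (a3 * E3) := by rw [h1, h2, h3, hcoc]
      rw [hamul] at hJ
      have : (a2 * a3) * E1 = (a2 * a3) * (E2 * E3) := by rw [hJ]; ring
      exact mul_left_cancel₀ (mul_ne_zero ha2 ha3) this
    have hexpΔ : Complex.exp (Complex.I * ((Δ Z : ℝ) : ℂ)) = 1 := by
      have harg : Complex.I * ((Δ Z : ℝ) : ℂ)
          = Complex.I * (L (M * N) Z) - Complex.I * (L M (spAct N Z))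
            - Complex.I * (L N Z) := by
        simp only [hΔdef]
        push_cast
        ring
      rw [harg, Complex.exp_sub, Complex.exp_sub, ← hE1, ← hE2, ← hE3, hE]
      rw [div_div, div_self (mul_ne_zero (Complex.exp_ne_zero _) (Complex.exp_ne_zero _))]
    obtain ⟨n, hn⟩ := Complex.exp_eq_one_iff.mp hexpΔ
    refine ⟨n, ?_⟩
    have him := congrArg Complex.im hn
    have : Δ Z = n * (2 * Real.pi) := by simpa [Complex.mul_im] using him
    rw [this]; ring
  have hcontΔ : ContinuousOn Δ (SiegelUHP g) := by
    refine ContinuousOn.sub (ContinuousOn.sub (hLcont _ hMN) ?_) (hLcont N hN)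
    exact (hLcont M hM).comp (spAct_continuousOn hN) (fun Z hZ => spAct_mem hN hZ)
  have hpre : IsPreconnected (SiegelUHP g) := siegel_convex.isPreconnected
  have himg : (Δ '' SiegelUHP g).OrdConnected :=
    (hpre.image Δ hcontΔ).ordConnected
  obtain ⟨k, hk⟩ := hint (iE g) iE_mem
  refine ⟨k, fun Z hZ => ?_⟩
  obtain ⟨m, hm⟩ := hint Z hZ
  show Δ Z = 2 * Real.pi * k
  rw [hm]
  congr 1
  push_cast
  -- show (m : ℝ) = k via connectedness
  by_contra hne
  have hmem1 : Δ (iE g) ∈ Δ '' SiegelUHP g := ⟨iE g, iE_mem, rfl⟩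
  have hmem2 : Δ Z ∈ Δ '' SiegelUHP g := ⟨Z, hZ, rfl⟩
  have hpi : (0 : ℝ) < Real.pi := Real.pi_pos
  have hkm : k ≠ m := by
    intro h; apply hne; rw [h]
  rcases lt_or_gt_of_ne hkm with hlt | hlt
  · have ht : 2 * Real.pi * k + Real.pi ∈ Set.Icc (Δ (iE g)) (Δ Z) := by
      constructor
      · rw [hk]; linarith
      · rw [hm]
        have : ((2 * k + 1 : ℤ) : ℝ) ≤ ((2 * m : ℤ) : ℝ) := by
          exact_mod_cast (by omega : (2 * k + 1 : ℤ) ≤ 2 * m)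
        push_cast at this
        nlinarith
    have := himg.out hmem1 hmem2 ht
    obtain ⟨Z', hZ', hval⟩ := this
    obtain ⟨n, hn⟩ := hint Z' hZ'
    rw [hval] at hn
    exact (no_half n k hn.symm).elim
  · have ht : 2 * Real.pi * m + Real.pi ∈ Set.Icc (Δ Z) (Δ (iE g)) := by
      constructor
      · rw [hm]; linarith
      · rw [hk]
        have : ((2 * m + 1 : ℤ) : ℝ) ≤ ((2 * k : ℤ) : ℝ) := by
          exact_mod_cast (by omega : (2 * m + 1 : ℤ) ≤ 2 * k)
        push_cast at this
        nlinarith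
    have := himg.out hmem2 hmem1 ht
    obtain ⟨Z', hZ', hval⟩ := this
    obtain ⟨n, hn⟩ := hint Z' hZ'
    rw [hval] at hn
    exact (no_half n m hn.symm).elim


end
end

section
/- The integer-valued function w on Sp(g,ℝ)×Sp(g,ℝ) is a 2-cocycle: w(M₁M₂,M₃) + w(M₁,M₂) = w(M₁,M₂M₃) + w(M₂,M₃), and w(E,M) = w(M,E) = 0 for all M₁,M₂,M₃,M ∈ Sp(g,ℝ). -/
open Matrix Complex

noncomputable section

namespace SW
variable {g : ℕ}

/-! ### cmat lemmas -/

lemma cmat_def (A : Matrix (Fin g) (Fin g) ℝ) : cmat A = A.map Complex.ofRealHom := rfl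

lemma cmat_mul (A B : Matrix (Fin g) (Fin g) ℝ) : cmat (A * B) = cmat A * cmat B := by
  simp [cmat_def, Matrix.map_mul]

lemma cmat_add (A B : Matrix (Fin g) (Fin g) ℝ) : cmat (A + B) = cmat A + cmat B := by
  simp [cmat_def, Matrix.map_add]

lemma cmat_one : cmat (1 : Matrix (Fin g) (Fin g) ℝ) = 1 := by
  simp [cmat_def, Matrix.map_one]

lemma cmat_zero : cmat (0 : Matrix (Fin g) (Fin g) ℝ) = 0 := by
  simp [cmat_def]

lemma cmat_transpose (A : Matrix (Fin g) (Fin g) ℝ) : cmat Aᵀ = (cmat A)ᵀ := by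
  simp [cmat_def, Matrix.transpose_map]

lemma cmat_conjTranspose (A : Matrix (Fin g) (Fin g) ℝ) : (cmat A)ᴴ = cmat Aᵀ := by
  ext i j; simp [cmat_def, conjTranspose_apply]

lemma cmat_injective : Function.Injective (cmat (g := g)) := by
  intro A B h
  ext i j
  have h2 : ((A i j : ℂ)) = (B i j : ℂ) := by
    have := congrFun (congrFun h i) j
    simpa [cmat, Matrix.map_apply] using this
  exact_mod_cast h2

/-- coercion of a real vector -/
def cvec (v : Fin g → ℝ) : Fin g → ℂ := fun i => (v i : ℂ)

lemma cmat_mulVec (A : Matrix (Fin g) (Fin g) ℝ) (v : Fin g → ℝ) :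
    cmat A *ᵥ cvec v = cvec (A *ᵥ v) := by
  funext i
  have := (RingHom.map_mulVec Complex.ofRealHom A v i).symm
  exact this

lemma cvec_dot (v w : Fin g → ℝ) : cvec v ⬝ᵥ cvec w = ((v ⬝ᵥ w : ℝ) : ℂ) := by
  have := RingHom.map_dotProduct Complex.ofRealHom v w
  exact this.symm

lemma star_cvec (v : Fin g → ℝ) : star (cvec v) = cvec v := by
  funext i; simp [cvec]

lemma dot_real (Y : Matrix (Fin g) (Fin g) ℝ) (v w : Fin g → ℝ) :
    cvec v ⬝ᵥ cmat Y *ᵥ cvec w = ((v ⬝ᵥ Y *ᵥ w : ℝ) : ℂ) := by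
  rw [cmat_mulVec, cvec_dot]

/-! ### posdef bridges -/

open ComplexOrder in
lemma posDef_cmat {Y : Matrix (Fin g) (Fin g) ℝ} (hY : Y.PosDef) : (cmat Y).PosDef := by
  have hsymm : Yᵀ = Y := hY.isHermitian
  refine Matrix.PosDef.of_dotProduct_mulVec_pos ?_ ?_
  · show (cmat Y)ᴴ = cmat Y
    rw [cmat_conjTranspose, hsymm]
  · intro x hx
    set a : Fin g → ℝ := fun i => (x i).re with ha
    set b : Fin g → ℝ := fun i => (x i).im with hb
    have hxab : x = cvec a + Complex.I • cvec b := by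
      funext i
      simp [cvec, ha, hb, Pi.add_apply, Pi.smul_apply, smul_eq_mul]
      exact (Complex.re_add_im (x i)).symm.trans (by ring)
    have hstar : star x = cvec a - Complex.I • cvec b := by
      funext i
      simp only [Pi.star_apply, Pi.sub_apply, Pi.smul_apply, cvec, smul_eq_mul]
      apply Complex.ext <;> simp [ha, hb]
    have hswapR : a ⬝ᵥ Y *ᵥ b = b ⬝ᵥ Y *ᵥ a := by
      rw [dotProduct_mulVec]
      conv_lhs => rw [← hsymm]
      rw [vecMul_transpose, dotProduct_comm]
    have hcalc : star x ⬝ᵥ cmat Y *ᵥ x = ((a ⬝ᵥ Y *ᵥ a + b ⬝ᵥ Y *ᵥ b : ℝ) : ℂ) := by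
      rw [hstar]
      conv_lhs => rw [hxab]
      simp only [mulVec_add, dotProduct_add, sub_dotProduct, mulVec_smul, dotProduct_smul,
        smul_dotProduct, dot_real, smul_eq_mul]
      rw [hswapR]
      push_cast
      ring_nf
      simp [Complex.I_sq]
    rw [hcalc]
    have hab : a ≠ 0 ∨ b ≠ 0 := by
      by_contra hc
      push_neg at hc
      apply hx
      funext i
      have h1 : (x i).re = 0 := congrFun hc.1 i
      have h2 : (x i).im = 0 := congrFun hc.2 i
      exact Complex.ext h1 h2
    have hpos : 0 < a ⬝ᵥ Y *ᵥ a + b ⬝ᵥ Y *ᵥ b := by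
      rcases hab with h | h
      · have := hY.dotProduct_mulVec_pos h
        have h2 := hY.posSemidef.dotProduct_mulVec_nonneg b
        simp only [star_trivial] at this h2
        linarith [this, h2]
      · have := hY.dotProduct_mulVec_pos h
        have h2 := hY.posSemidef.dotProduct_mulVec_nonneg a
        simp only [star_trivial] at this h2
        linarith
    exact_mod_cast Complex.zero_lt_real.mpr hpos

open ComplexOrder in
lemma posDef_of_cmat {Y : Matrix (Fin g) (Fin g) ℝ} (h : (cmat Y).PosDef) : Y.PosDef := by
  refine Matrix.PosDef.of_dotProduct_mulVec_pos ?_ ?_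
  · have h1 : (cmat Y)ᴴ = cmat Y := h.1
    rw [cmat_conjTranspose] at h1
    exact cmat_injective h1
  · intro x hx
    have hxc : cvec x ≠ 0 := by
      intro hc
      apply hx
      funext i
      have := congrFun hc i
      simpa [cvec] using this
    have := h.dotProduct_mulVec_pos hxc
    rw [star_cvec, dot_real] at this
    simpa [star_trivial] using Complex.zero_lt_real.mp this

/-! ### symplectic block relations -/

lemma sp_rel {M : SpMat g} (hM : M ∈ Matrix.symplecticGroup (Fin g) ℝ) :
    M.toBlocks₂₁ᵀ * M.toBlocks₁₁ = M.toBlocks₁₁ᵀ * M.toBlocks₂₁ ∧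
    M.toBlocks₁₁ᵀ * M.toBlocks₂₂ = M.toBlocks₂₁ᵀ * M.toBlocks₁₂ + 1 ∧
    M.toBlocks₂₂ᵀ * M.toBlocks₁₁ = M.toBlocks₁₂ᵀ * M.toBlocks₂₁ + 1 ∧
    M.toBlocks₁₂ᵀ * M.toBlocks₂₂ = M.toBlocks₂₂ᵀ * M.toBlocks₁₂ := by
  have h := SymplecticGroup.mem_iff'.mp hM
  set A := M.toBlocks₁₁
  set B := M.toBlocks₁₂
  set C := M.toBlocks₂₁
  set D := M.toBlocks₂₂
  have h2 : (fromBlocks A B C D)ᵀ * Matrix.J (Fin g) ℝ * fromBlocks A B C D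
      = Matrix.J (Fin g) ℝ := by
    rw [fromBlocks_toBlocks]; exact h
  rw [Matrix.J, fromBlocks_transpose, fromBlocks_multiply, fromBlocks_multiply] at h2
  have e11 := congrArg Matrix.toBlocks₁₁ h2
  have e12 := congrArg Matrix.toBlocks₁₂ h2
  have e21 := congrArg Matrix.toBlocks₂₁ h2
  have e22 := congrArg Matrix.toBlocks₂₂ h2
  simp only [toBlocks_fromBlocks₁₁, toBlocks_fromBlocks₁₂, toBlocks_fromBlocks₂₁,
    toBlocks_fromBlocks₂₂, Matrix.mul_zero, Matrix.zero_mul, Matrix.mul_one, Matrix.one_mul,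
    Matrix.mul_neg, Matrix.neg_mul, add_zero, zero_add] at e11 e12 e21 e22
  refine ⟨?_, ?_, ?_, ?_⟩
  · linear_combination (norm := abel) e11
  · linear_combination (norm := abel) -e12
  · linear_combination (norm := abel) e21
  · linear_combination (norm := abel) -e22

/-! ### generic ring identities -/

lemma ring_id1 {R : Type*} [Ring R] {a' b' c' d' a b c d Z : R}
    (h1 : a' * c = c' * a) (h2 : a' * d = c' * b + 1) (h3 : d' * a = b' * c + 1)
    (h4 : b' * d = d' * b) :
    (Z * a' + b') * (c * Z + d) = (Z * c' + d') * (a * Z + b) := by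
  calc (Z * a' + b') * (c * Z + d)
      = Z * (a' * c) * Z + Z * (a' * d) + b' * c * Z + b' * d := by noncomm_ring
    _ = Z * (c' * a) * Z + Z * (c' * b + 1) + b' * c * Z + d' * b := by rw [h1, h2, h4]
    _ = Z * (c' * a) * Z + Z * (c' * b) + (b' * c + 1) * Z + d' * b := by noncomm_ring
    _ = Z * (c' * a) * Z + Z * (c' * b) + (d' * a) * Z + d' * b := by rw [h3]
    _ = (Z * c' + d') * (a * Z + b) := by noncomm_ring

lemma ring_id2 {R : Type*} [Ring R] {a' b' c' d' a b c d Z W : R}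
    (h1 : a' * c = c' * a) (h2 : a' * d = c' * b + 1) (h3 : d' * a = b' * c + 1)
    (h4 : b' * d = d' * b) :
    (W * c' + d') * (a * Z + b) - (W * a' + b') * (c * Z + d) = Z - W := by
  calc (W * c' + d') * (a * Z + b) - (W * a' + b') * (c * Z + d)
      = W * (c' * a) * Z + W * (c' * b) + d' * a * Z + d' * b
        - (W * (a' * c) * Z + W * (a' * d) + b' * c * Z + b' * d) := by noncomm_ring
    _ = W * (c' * a) * Z + W * (c' * b) + (b' * c + 1) * Z + d' * b
        - (W * (c' * a) * Z + W * (c' * b + 1) + b' * c * Z + d' * b) := by rw [h1, h2, h3, h4]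
    _ = Z - W := by noncomm_ring

/-! ### P and Q -/

/-- numerator of the action -/
def Pm (M : SpMat g) (Z : Matrix (Fin g) (Fin g) ℂ) : Matrix (Fin g) (Fin g) ℂ :=
  cmat M.toBlocks₁₁ * Z + cmat M.toBlocks₁₂

/-- denominator of the action -/
def Qm (M : SpMat g) (Z : Matrix (Fin g) (Fin g) ℂ) : Matrix (Fin g) (Fin g) ℂ :=
  cmat M.toBlocks₂₁ * Z + cmat M.toBlocks₂₂

lemma Jfac_eq (M : SpMat g) (Z : Matrix (Fin g) (Fin g) ℂ) : Jfac M Z = (Qm M Z).det := rfl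

lemma spAct_eq (M : SpMat g) (Z : Matrix (Fin g) (Fin g) ℂ) :
    spAct M Z = Pm M Z * (Qm M Z)⁻¹ := rfl

/-- the real matrix of imaginary parts -/
def imM (Z : Matrix (Fin g) (Fin g) ℂ) : Matrix (Fin g) (Fin g) ℝ :=
  Matrix.of fun i j => (Z i j).im

lemma mem_uhp_iff {Z : Matrix (Fin g) (Fin g) ℂ} :
    Z ∈ SiegelUHP g ↔ Z.IsSymm ∧ (imM Z).PosDef := Iff.rfl

/-- symplectic relations over ℂ -/
lemma sp_rel_c {M : SpMat g} (hM : M ∈ Matrix.symplecticGroup (Fin g) ℝ) :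
    (cmat M.toBlocks₁₁)ᵀ * cmat M.toBlocks₂₁ = (cmat M.toBlocks₂₁)ᵀ * cmat M.toBlocks₁₁ ∧
    (cmat M.toBlocks₁₁)ᵀ * cmat M.toBlocks₂₂ = (cmat M.toBlocks₂₁)ᵀ * cmat M.toBlocks₁₂ + 1 ∧
    (cmat M.toBlocks₂₂)ᵀ * cmat M.toBlocks₁₁ = (cmat M.toBlocks₁₂)ᵀ * cmat M.toBlocks₂₁ + 1 ∧
    (cmat M.toBlocks₁₂)ᵀ * cmat M.toBlocks₂₂ = (cmat M.toBlocks₂₂)ᵀ * cmat M.toBlocks₁₂ := by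
  obtain ⟨r1, r2, r3, r4⟩ := sp_rel hM
  refine ⟨?_, ?_, ?_, ?_⟩
  · have := congrArg cmat r1
    rw [cmat_mul, cmat_mul, cmat_transpose, cmat_transpose] at this
    exact this.symm
  · have := congrArg cmat r2
    rw [cmat_mul, cmat_add, cmat_mul, cmat_one, cmat_transpose, cmat_transpose] at this
    exact this
  · have := congrArg cmat r3
    rw [cmat_mul, cmat_add, cmat_mul, cmat_one, cmat_transpose, cmat_transpose] at this
    exact this
  · have := congrArg cmat r4
    rw [cmat_mul, cmat_mul, cmat_transpose, cmat_transpose] at this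
    exact this

lemma PtQ {M : SpMat g} {Z : Matrix (Fin g) (Fin g) ℂ}
    (hM : M ∈ Matrix.symplecticGroup (Fin g) ℝ) (hZ : Z ∈ SiegelUHP g) :
    (Pm M Z)ᵀ * Qm M Z = (Qm M Z)ᵀ * Pm M Z := by
  obtain ⟨h1, h2, h3, h4⟩ := sp_rel_c hM
  have hsym : Zᵀ = Z := hZ.1
  show (cmat M.toBlocks₁₁ * Z + cmat M.toBlocks₁₂)ᵀ * (cmat M.toBlocks₂₁ * Z + cmat M.toBlocks₂₂)
      = (cmat M.toBlocks₂₁ * Z + cmat M.toBlocks₂₂)ᵀ * (cmat M.toBlocks₁₁ * Z + cmat M.toBlocks₁₂)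
  rw [transpose_add, transpose_mul, transpose_add, transpose_mul, hsym]
  exact ring_id1 h1 h2 h3 h4

lemma QhP {M : SpMat g} {Z : Matrix (Fin g) (Fin g) ℂ}
    (hM : M ∈ Matrix.symplecticGroup (Fin g) ℝ) (hZ : Z ∈ SiegelUHP g) :
    (Qm M Z)ᴴ * Pm M Z - (Pm M Z)ᴴ * Qm M Z = (2 * Complex.I) • cmat (imM Z) := by
  obtain ⟨h1, h2, h3, h4⟩ := sp_rel_c hM
  have hsym : Zᵀ = Z := hZ.1
  set W := Z.map (starRingEnd ℂ) with hW
  have hZh : Zᴴ = W := by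
    rw [conjTranspose, hsym]; rfl
  have hQh : (Qm M Z)ᴴ = W * (cmat M.toBlocks₂₁)ᵀ + (cmat M.toBlocks₂₂)ᵀ := by
    show (cmat M.toBlocks₂₁ * Z + cmat M.toBlocks₂₂)ᴴ = _
    rw [conjTranspose_add, conjTranspose_mul, hZh, cmat_conjTranspose, cmat_conjTranspose,
      cmat_transpose, cmat_transpose]
  have hPh : (Pm M Z)ᴴ = W * (cmat M.toBlocks₁₁)ᵀ + (cmat M.toBlocks₁₂)ᵀ := by
    show (cmat M.toBlocks₁₁ * Z + cmat M.toBlocks₁₂)ᴴ = _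
    rw [conjTranspose_add, conjTranspose_mul, hZh, cmat_conjTranspose, cmat_conjTranspose,
      cmat_transpose, cmat_transpose]
  rw [hQh, hPh]
  simp only [Pm, Qm]
  have := ring_id2 (Z := Z) (W := W) h1 h2 h3 h4
  rw [this, hW]
  ext i j
  simp only [Matrix.sub_apply, Matrix.map_apply, Matrix.smul_apply, cmat, imM, Matrix.of_apply, smul_eq_mul]
  rw [Complex.sub_conj]
  push_cast
  ring

open ComplexOrder in
lemma det_Q_unit {M : SpMat g} {Z : Matrix (Fin g) (Fin g) ℂ}
    (hM : M ∈ Matrix.symplecticGroup (Fin g) ℝ) (hZ : Z ∈ SiegelUHP g) :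
    IsUnit (Qm M Z).det := by
  rw [isUnit_iff_ne_zero]
  intro hdet
  obtain ⟨v, hv, hQv⟩ := (Matrix.exists_mulVec_eq_zero_iff).mpr hdet
  have key := congrArg (fun X => star v ⬝ᵥ X *ᵥ v) (QhP hM hZ)
  have hL : star v ⬝ᵥ ((Qm M Z)ᴴ * Pm M Z - (Pm M Z)ᴴ * Qm M Z) *ᵥ v = 0 := by
    rw [sub_mulVec, dotProduct_sub]
    have t1 : star v ⬝ᵥ ((Qm M Z)ᴴ * Pm M Z) *ᵥ v = 0 := by
      rw [← mulVec_mulVec, dotProduct_mulVec, ← star_mulVec, hQv]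
      simp
    have t2 : star v ⬝ᵥ ((Pm M Z)ᴴ * Qm M Z) *ᵥ v = 0 := by
      rw [← mulVec_mulVec, hQv]
      simp
    rw [t1, t2, sub_zero]
  rw [hL] at key
  have hpos := (posDef_cmat hZ.2).dotProduct_mulVec_pos hv
  have : star v ⬝ᵥ ((2 * Complex.I) • cmat (imM Z)) *ᵥ v
      = (2 * Complex.I) * (star v ⬝ᵥ cmat (imM Z) *ᵥ v) := by
    rw [smul_mulVec, dotProduct_smul, smul_eq_mul]
  rw [this] at key
  have h2I : (2 * Complex.I) ≠ 0 := by simp [Complex.I_ne_zero]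
  have := mul_eq_zero.mp key.symm
  rcases this with h | h
  · exact h2I h
  · exact (ne_of_gt hpos) h

lemma Jfac_ne_zero {M : SpMat g} {Z : Matrix (Fin g) (Fin g) ℂ}
    (hM : M ∈ Matrix.symplecticGroup (Fin g) ℝ) (hZ : Z ∈ SiegelUHP g) :
    Jfac M Z ≠ 0 := by
  rw [Jfac_eq]
  exact (det_Q_unit hM hZ).ne_zero

open ComplexOrder in
lemma spAct_mem {M : SpMat g} {Z : Matrix (Fin g) (Fin g) ℂ}
    (hM : M ∈ Matrix.symplecticGroup (Fin g) ℝ) (hZ : Z ∈ SiegelUHP g) :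
    spAct M Z ∈ SiegelUHP g := by
  have hQ := det_Q_unit hM hZ
  have hQt : IsUnit (Qm M Z)ᵀ.det := by rwa [Matrix.det_transpose]
  have hQh : IsUnit (Qm M Z)ᴴ.det := by
    rw [Matrix.det_conjTranspose]
    exact hQ.star
  set P := Pm M Z
  set Q := Qm M Z
  have hsymE : (spAct M Z)ᵀ = spAct M Z := by
    rw [spAct_eq]
    calc (P * Q⁻¹)ᵀ = Q⁻¹ᵀ * Pᵀ := transpose_mul _ _
      _ = Qᵀ⁻¹ * Pᵀ := by rw [transpose_nonsing_inv]
      _ = Qᵀ⁻¹ * (Qᵀ * (P * Q⁻¹)) := by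
          congr 1
          calc Pᵀ = Pᵀ * (Q * Q⁻¹) := by rw [mul_nonsing_inv _ hQ, Matrix.mul_one]
            _ = (Pᵀ * Q) * Q⁻¹ := by rw [Matrix.mul_assoc]
            _ = (Qᵀ * P) * Q⁻¹ := by rw [PtQ hM hZ]
            _ = Qᵀ * (P * Q⁻¹) := by rw [Matrix.mul_assoc]
      _ = (Qᵀ⁻¹ * Qᵀ) * (P * Q⁻¹) := by rw [Matrix.mul_assoc]
      _ = P * Q⁻¹ := by rw [nonsing_inv_mul _ hQt, Matrix.one_mul]
  set E := spAct M Z with hE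
  have hEh : Eᴴ = (Q⁻¹)ᴴ * Pᴴ := by
    rw [hE, spAct_eq]
    exact conjTranspose_mul _ _
  have hsub : E - Eᴴ = (Q⁻¹)ᴴ * ((Qᴴ * P - Pᴴ * Q)) * Q⁻¹ := by
    rw [Matrix.mul_sub, Matrix.sub_mul]
    have c1 : (Q⁻¹)ᴴ * (Qᴴ * P) * Q⁻¹ = E := by
      rw [conjTranspose_nonsing_inv, ← Matrix.mul_assoc, nonsing_inv_mul _ hQh,
        Matrix.one_mul, hE, spAct_eq]
    have c2 : (Q⁻¹)ᴴ * (Pᴴ * Q) * Q⁻¹ = Eᴴ := by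
      rw [Matrix.mul_assoc, Matrix.mul_assoc, mul_nonsing_inv _ hQ, Matrix.mul_one, hEh]
    rw [c1, c2]
  have hImE : cmat (imM E) = (Q⁻¹)ᴴ * cmat (imM Z) * Q⁻¹ := by
    have lhs2 : (2 * Complex.I) • cmat (imM E) = E - Eᴴ := by
      ext i j
      simp only [Matrix.sub_apply, Matrix.smul_apply, cmat, imM, Matrix.map_apply, Matrix.of_apply,
        smul_eq_mul, conjTranspose_apply]
      have heq : E j i = E i j := by
        conv_lhs => rw [← hsymE]
        rfl
      rw [heq]
      apply Complex.ext <;>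
        simp [Complex.mul_re, Complex.mul_im, Complex.sub_re, Complex.sub_im] <;> ring
    have rhs2 : E - Eᴴ = (2 * Complex.I) • ((Q⁻¹)ᴴ * cmat (imM Z) * Q⁻¹) := by
      rw [hsub, QhP hM hZ]
      rw [Matrix.mul_smul, Matrix.smul_mul]
    have := lhs2.trans rhs2
    exact smul_right_injective _ (by simp [Complex.I_ne_zero] : (2 * Complex.I) ≠ 0) this
  refine ⟨hsymE, ?_⟩
  apply posDef_of_cmat
  show (cmat (imM E)).PosDef
  rw [hImE]
  have hYc : (cmat (imM Z)).PosDef := posDef_cmat hZ.2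
  refine Matrix.PosDef.of_dotProduct_mulVec_pos ?_ ?_
  · show ((Q⁻¹)ᴴ * cmat (imM Z) * Q⁻¹)ᴴ = _
    rw [conjTranspose_mul, conjTranspose_mul, conjTranspose_conjTranspose, hYc.1.eq,
      ← Matrix.mul_assoc]
  · intro x hx
    have hBx : Q⁻¹ *ᵥ x ≠ 0 := by
      intro hc
      apply hx
      have : (Q * Q⁻¹) *ᵥ x = Q *ᵥ (Q⁻¹ *ᵥ x) := (mulVec_mulVec _ _ _).symm
      rw [mul_nonsing_inv _ hQ, hc, mulVec_zero] at this
      simpa using this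
    have expand : star x ⬝ᵥ ((Q⁻¹)ᴴ * cmat (imM Z) * Q⁻¹) *ᵥ x
        = star (Q⁻¹ *ᵥ x) ⬝ᵥ cmat (imM Z) *ᵥ (Q⁻¹ *ᵥ x) := by
      rw [Matrix.mul_assoc, ← mulVec_mulVec, dotProduct_mulVec, ← star_mulVec, ← mulVec_mulVec]
    rw [expand]
    exact hYc.dotProduct_mulVec_pos hBx

/-! ### cocycle identities for P, Q, J and the action -/

lemma blocks_mul (M N : SpMat g) :
    (M * N).toBlocks₁₁ = M.toBlocks₁₁ * N.toBlocks₁₁ + M.toBlocks₁₂ * N.toBlocks₂₁ ∧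
    (M * N).toBlocks₁₂ = M.toBlocks₁₁ * N.toBlocks₁₂ + M.toBlocks₁₂ * N.toBlocks₂₂ ∧
    (M * N).toBlocks₂₁ = M.toBlocks₂₁ * N.toBlocks₁₁ + M.toBlocks₂₂ * N.toBlocks₂₁ ∧
    (M * N).toBlocks₂₂ = M.toBlocks₂₁ * N.toBlocks₁₂ + M.toBlocks₂₂ * N.toBlocks₂₂ := by
  have h : M * N = fromBlocks
      (M.toBlocks₁₁ * N.toBlocks₁₁ + M.toBlocks₁₂ * N.toBlocks₂₁)
      (M.toBlocks₁₁ * N.toBlocks₁₂ + M.toBlocks₁₂ * N.toBlocks₂₂)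
      (M.toBlocks₂₁ * N.toBlocks₁₁ + M.toBlocks₂₂ * N.toBlocks₂₁)
      (M.toBlocks₂₁ * N.toBlocks₁₂ + M.toBlocks₂₂ * N.toBlocks₂₂) := by
    conv_lhs => rw [← fromBlocks_toBlocks M, ← fromBlocks_toBlocks N]
    rw [fromBlocks_multiply]
  refine ⟨?_, ?_, ?_, ?_⟩ <;> rw [h] <;> simp

lemma PQ_mul {M N : SpMat g} {Z : Matrix (Fin g) (Fin g) ℂ}
    (hN : N ∈ Matrix.symplecticGroup (Fin g) ℝ) (hZ : Z ∈ SiegelUHP g) :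
    Pm (M * N) Z = Pm M (spAct N Z) * Qm N Z ∧
    Qm (M * N) Z = Qm M (spAct N Z) * Qm N Z := by
  have hQN := det_Q_unit hN hZ
  obtain ⟨b11, b12, b21, b22⟩ := blocks_mul M N
  have hinv : (Qm N Z)⁻¹ * Qm N Z = 1 := nonsing_inv_mul _ hQN
  constructor
  · have hR : (cmat M.toBlocks₁₁ * spAct N Z + cmat M.toBlocks₁₂) * Qm N Z
        = cmat M.toBlocks₁₁ * Pm N Z + cmat M.toBlocks₁₂ * Qm N Z := by
      rw [spAct_eq, Matrix.add_mul, Matrix.mul_assoc, Matrix.mul_assoc, hinv, Matrix.mul_one]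
    show cmat (M * N).toBlocks₁₁ * Z + cmat (M * N).toBlocks₁₂
        = (cmat M.toBlocks₁₁ * spAct N Z + cmat M.toBlocks₁₂) * Qm N Z
    rw [hR, b11, b12, cmat_add, cmat_add, cmat_mul, cmat_mul, cmat_mul, cmat_mul]
    simp only [Pm, Qm, Matrix.mul_add, Matrix.add_mul, Matrix.mul_assoc]
    abel
  · have hR : (cmat M.toBlocks₂₁ * spAct N Z + cmat M.toBlocks₂₂) * Qm N Z
        = cmat M.toBlocks₂₁ * Pm N Z + cmat M.toBlocks₂₂ * Qm N Z := by
      rw [spAct_eq, Matrix.add_mul, Matrix.mul_assoc, Matrix.mul_assoc, hinv, Matrix.mul_one]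
    show cmat (M * N).toBlocks₂₁ * Z + cmat (M * N).toBlocks₂₂
        = (cmat M.toBlocks₂₁ * spAct N Z + cmat M.toBlocks₂₂) * Qm N Z
    rw [hR, b21, b22, cmat_add, cmat_add, cmat_mul, cmat_mul, cmat_mul, cmat_mul]
    simp only [Pm, Qm, Matrix.mul_add, Matrix.add_mul, Matrix.mul_assoc]
    abel

lemma Jfac_cocycle {M N : SpMat g} {Z : Matrix (Fin g) (Fin g) ℂ}
    (hN : N ∈ Matrix.symplecticGroup (Fin g) ℝ) (hZ : Z ∈ SiegelUHP g) :
    Jfac (M * N) Z = Jfac M (spAct N Z) * Jfac N Z := by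
  rw [Jfac_eq, Jfac_eq, Jfac_eq, (PQ_mul hN hZ).2, Matrix.det_mul]

lemma spAct_mul {M N : SpMat g} {Z : Matrix (Fin g) (Fin g) ℂ}
    (hN : N ∈ Matrix.symplecticGroup (Fin g) ℝ) (hZ : Z ∈ SiegelUHP g) :
    spAct (M * N) Z = spAct M (spAct N Z) := by
  have hQN := det_Q_unit hN hZ
  obtain ⟨hP, hQ⟩ := PQ_mul (M := M) hN hZ
  rw [spAct_eq, spAct_eq, hP, hQ, Matrix.mul_inv_rev, Matrix.mul_assoc,
    ← Matrix.mul_assoc (Qm N Z), mul_nonsing_inv _ hQN, Matrix.one_mul]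

/-! ### topology -/

lemma contOn_spAct {M : SpMat g} (hM : M ∈ Matrix.symplecticGroup (Fin g) ℝ) :
    ContinuousOn (spAct M) (SiegelUHP g) := by
  intro Z hZ
  apply ContinuousAt.continuousWithinAt
  have hP : Continuous (fun W => Pm M W) := by
    exact (continuous_const.matrix_mul continuous_id).add continuous_const
  have hQ : Continuous (fun W => Qm M W) := by
    exact (continuous_const.matrix_mul continuous_id).add continuous_const
  have hinv : ContinuousAt (fun W => (Qm M W)⁻¹) Z := by
    apply ContinuousAt.comp (g := Inv.inv)
    · apply continuousAt_matrix_inv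
      have hu := det_Q_unit hM hZ
      have := NormedRing.inverse_continuousAt hu.unit
      simpa using this
    · exact hQ.continuousAt
  exact hP.continuousAt.mul hinv

lemma iE_mem : iE g ∈ SiegelUHP g := by
  constructor
  · show (iE g)ᵀ = iE g
    rw [iE, transpose_smul, transpose_one]
  · have : (Matrix.of fun i j => ((iE g) i j).im) = (1 : Matrix (Fin g) (Fin g) ℝ) := by
      ext i j
      by_cases h : i = j <;> simp [iE, Matrix.one_apply, h]
    rw [this]
    exact Matrix.PosDef.one

lemma uhp_convex : Convex ℝ (SiegelUHP g) := by
  intro Z₁ h₁ Z₂ h₂ a b ha hb hab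
  constructor
  · show (a • Z₁ + b • Z₂)ᵀ = a • Z₁ + b • Z₂
    rw [transpose_add, transpose_smul, transpose_smul, h₁.1, h₂.1]
  · have hkey : (Matrix.of fun i j => ((a • Z₁ + b • Z₂) i j).im)
        = a • (Matrix.of fun i j => ((Z₁ : Matrix (Fin g) (Fin g) ℂ) i j).im)
          + b • (Matrix.of fun i j => ((Z₂ : Matrix (Fin g) (Fin g) ℂ) i j).im) := by
      ext i j
      simp [Matrix.add_apply, Matrix.smul_apply, Complex.add_im, Complex.smul_im]
    rw [hkey]
    set Y₁ := Matrix.of fun i j => ((Z₁ : Matrix (Fin g) (Fin g) ℂ) i j).im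
    set Y₂ := Matrix.of fun i j => ((Z₂ : Matrix (Fin g) (Fin g) ℂ) i j).im
    have hY₁ : Y₁.PosDef := h₁.2
    have hY₂ : Y₂.PosDef := h₂.2
    refine Matrix.PosDef.of_dotProduct_mulVec_pos ?_ ?_
    · show (a • Y₁ + b • Y₂)ᴴ = _
      rw [conjTranspose_add, conjTranspose_smul, conjTranspose_smul]
      simp only [star_trivial]
      rw [hY₁.1.eq, hY₂.1.eq]
    · intro x hx
      have e : star x ⬝ᵥ (a • Y₁ + b • Y₂) *ᵥ x
          = a * (star x ⬝ᵥ Y₁ *ᵥ x) + b * (star x ⬝ᵥ Y₂ *ᵥ x) := by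
        rw [add_mulVec, dotProduct_add, smul_mulVec, smul_mulVec,
          dotProduct_smul, dotProduct_smul, smul_eq_mul, smul_eq_mul]
      rw [e]
      have p1 := hY₁.dotProduct_mulVec_pos hx
      have p2 := hY₂.dotProduct_mulVec_pos hx
      rcases lt_or_eq_of_le ha with ha' | ha'
      · have := mul_nonneg hb p2.le
        nlinarith
      · have hb1 : b = 1 := by linarith
        rw [← ha', hb1]
        simpa using p2

/-! ### integer-valued constancy -/

lemma const_of_integer {X : Type*} [TopologicalSpace X] {s : Set X} (hs : IsPreconnected s)
    {f : X → ℝ} (hf : ContinuousOn f s) (hint : ∀ x ∈ s, ∃ n : ℤ, f x = n)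
    {x y : X} (hx : x ∈ s) (hy : y ∈ s) : f x = f y := by
  have him : IsPreconnected (f '' s) := hs.image f hf
  have hoc := him.ordConnected
  by_contra hne
  have key : ∀ p q : ℤ, (p : ℝ) ∈ f '' s → (q : ℝ) ∈ f '' s → p < q → False := by
    intro p q hp hq hpq
    have h1 : (p : ℝ) + 1 ≤ q := by exact_mod_cast hpq
    have ht : (p : ℝ) + 1/2 ∈ Set.Icc (p : ℝ) (q : ℝ) := by
      constructor <;> [linarith; linarith]
    have := hoc.out hp hq ht
    obtain ⟨z, hz, hfz⟩ := this
    obtain ⟨k, hk⟩ := hint z hz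
    rw [hk] at hfz
    have : (2 * k : ℤ) = 2 * p + 1 := by
      have : (2 * (k : ℝ)) = 2 * p + 1 := by linarith [hfz]
      exact_mod_cast this
    omega
  obtain ⟨m, hm⟩ := hint x hx
  obtain ⟨n, hn⟩ := hint y hy
  have hmem1 : (m : ℝ) ∈ f '' s := ⟨x, hx, hm⟩
  have hmem2 : (n : ℝ) ∈ f '' s := ⟨y, hy, hn⟩
  rcases lt_trichotomy m n with h | h | h
  · exact key m n hmem1 hmem2 h
  · apply hne; rw [hm, hn, h]
  · exact key n m hmem2 hmem1 h

lemma uhp_preconnected : IsPreconnected (SiegelUHP g) :=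
  uhp_convex.isPreconnected

/-! ### integrality -/

lemma exists_int {L : SpMat g → Matrix (Fin g) (Fin g) ℂ → ℝ} (hL : IsArgBranch g L)
    {M N : SpMat g} {Z : Matrix (Fin g) (Fin g) ℂ}
    (hM : M ∈ Matrix.symplecticGroup (Fin g) ℝ) (hN : N ∈ Matrix.symplecticGroup (Fin g) ℝ)
    (hZ : Z ∈ SiegelUHP g) :
    ∃ n : ℤ, L M (spAct N Z) + L N Z - L (M * N) Z = 2 * Real.pi * n := by
  obtain ⟨hcont, hbr, hbase⟩ := hL
  have hMN : M * N ∈ Matrix.symplecticGroup (Fin g) ℝ := mul_mem hM hN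
  have hNZ : spAct N Z ∈ SiegelUHP g := spAct_mem hN hZ
  have e1 := hbr M hM (spAct N Z) hNZ
  have e2 := hbr N hN Z hZ
  have e12 := hbr (M * N) hMN Z hZ
  have hJ1 : Jfac M (spAct N Z) ≠ 0 := Jfac_ne_zero hM hNZ
  have hJ2 : Jfac N Z ≠ 0 := Jfac_ne_zero hN hZ
  have hJ12 : Jfac (M * N) Z ≠ 0 := Jfac_ne_zero hMN hZ
  have ha1 : ((‖Jfac M (spAct N Z)‖ : ℝ) : ℂ) ≠ 0 := by
    simpa using (norm_ne_zero_iff.mpr hJ1)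
  have ha2 : ((‖Jfac N Z‖ : ℝ) : ℂ) ≠ 0 := by
    simpa using (norm_ne_zero_iff.mpr hJ2)
  have hco : Jfac (M * N) Z = Jfac M (spAct N Z) * Jfac N Z := Jfac_cocycle hN hZ
  have habs : ((‖Jfac (M * N) Z‖ : ℝ) : ℂ)
      = ((‖Jfac M (spAct N Z)‖ : ℝ) : ℂ) * ((‖Jfac N Z‖ : ℝ) : ℂ) := by
    rw [hco, norm_mul]
    push_cast
    ring
  have hexp : Complex.exp (Complex.I * (L M (spAct N Z)))
      * Complex.exp (Complex.I * (L N Z))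
      = Complex.exp (Complex.I * (L (M * N) Z)) := by
    have hmul : (((‖Jfac M (spAct N Z)‖ : ℝ) : ℂ) * ((‖Jfac N Z‖ : ℝ) : ℂ))
        * (Complex.exp (Complex.I * (L M (spAct N Z))) * Complex.exp (Complex.I * (L N Z)))
        = (((‖Jfac M (spAct N Z)‖ : ℝ) : ℂ) * ((‖Jfac N Z‖ : ℝ) : ℂ))
        * Complex.exp (Complex.I * (L (M * N) Z)) := by
      calc (((‖Jfac M (spAct N Z)‖ : ℝ) : ℂ) * ((‖Jfac N Z‖ : ℝ) : ℂ))
          * (Complex.exp (Complex.I * (L M (spAct N Z))) * Complex.exp (Complex.I * (L N Z)))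
          = (((‖Jfac M (spAct N Z)‖ : ℝ) : ℂ) * Complex.exp (Complex.I * (L M (spAct N Z))))
            * (((‖Jfac N Z‖ : ℝ) : ℂ) * Complex.exp (Complex.I * (L N Z))) := by ring
        _ = Jfac M (spAct N Z) * Jfac N Z := by rw [e1, e2]
        _ = Jfac (M * N) Z := hco.symm
        _ = ((‖Jfac (M * N) Z‖ : ℝ) : ℂ) * Complex.exp (Complex.I * (L (M * N) Z)) :=
            e12.symm
        _ = _ := by rw [habs]
    exact mul_left_cancel₀ (mul_ne_zero ha1 ha2) hmul
  have hone : Complex.exp (Complex.I *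
      ((L M (spAct N Z) + L N Z - L (M * N) Z : ℝ) : ℂ)) = 1 := by
    have : Complex.I * ((L M (spAct N Z) + L N Z - L (M * N) Z : ℝ) : ℂ)
        = Complex.I * (L M (spAct N Z)) + Complex.I * (L N Z) - Complex.I * (L (M * N) Z) := by
      push_cast
      ring
    rw [this, Complex.exp_sub, Complex.exp_add, hexp, div_self (Complex.exp_ne_zero _)]
  obtain ⟨n, hn⟩ := Complex.exp_eq_one_iff.mp hone
  refine ⟨n, ?_⟩
  have him := congrArg Complex.im hn
  simp only [Complex.mul_im, Complex.I_re, Complex.I_im, Complex.ofReal_re, Complex.ofReal_im,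
    Complex.intCast_im, Complex.intCast_re, Complex.mul_re] at him
  have : L M (spAct N Z) + L N Z - L (M * N) Z = (n : ℝ) * (2 * Real.pi) := by
    simpa using him
  rw [this]; ring

/-! ### L at the identity -/

lemma Jfac_one (Z : Matrix (Fin g) (Fin g) ℂ) : Jfac (1 : SpMat g) Z = 1 := by
  have h21 : (1 : SpMat g).toBlocks₂₁ = 0 := by
    rw [← fromBlocks_one, toBlocks_fromBlocks₂₁]
  have h22 : (1 : SpMat g).toBlocks₂₂ = 1 := by
    rw [← fromBlocks_one, toBlocks_fromBlocks₂₂]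
  rw [Jfac, h21, h22, cmat_zero, cmat_one, Matrix.zero_mul, zero_add, Matrix.det_one]

lemma spAct_one (Z : Matrix (Fin g) (Fin g) ℂ) : spAct (1 : SpMat g) Z = Z := by
  have h11 : (1 : SpMat g).toBlocks₁₁ = 1 := by
    rw [← fromBlocks_one, toBlocks_fromBlocks₁₁]
  have h12 : (1 : SpMat g).toBlocks₁₂ = 0 := by
    rw [← fromBlocks_one, toBlocks_fromBlocks₁₂]
  have h21 : (1 : SpMat g).toBlocks₂₁ = 0 := by
    rw [← fromBlocks_one, toBlocks_fromBlocks₂₁]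
  have h22 : (1 : SpMat g).toBlocks₂₂ = 1 := by
    rw [← fromBlocks_one, toBlocks_fromBlocks₂₂]
  rw [spAct, h11, h12, h21, h22, cmat_zero, cmat_one, Matrix.zero_mul, zero_add, inv_one,
    Matrix.mul_one, Matrix.one_mul, add_zero]

lemma L_one_eq_zero {L : SpMat g → Matrix (Fin g) (Fin g) ℂ → ℝ} (hL : IsArgBranch g L)
    {Z : Matrix (Fin g) (Fin g) ℂ} (hZ : Z ∈ SiegelUHP g) : L 1 Z = 0 := by
  obtain ⟨hcont, hbr, hbase⟩ := hL
  have h1 : (1 : SpMat g) ∈ Matrix.symplecticGroup (Fin g) ℝ := one_mem _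
  have hint : ∀ W ∈ SiegelUHP g, ∃ n : ℤ, L 1 W / (2 * Real.pi) = n := by
    intro W hW
    have := hbr 1 h1 W hW
    rw [Jfac_one] at this
    simp only [_root_.map_one, norm_one, Complex.ofReal_one, one_mul] at this
    obtain ⟨n, hn⟩ := Complex.exp_eq_one_iff.mp this
    refine ⟨n, ?_⟩
    have him := congrArg Complex.im hn
    simp only [Complex.mul_im, Complex.I_re, Complex.I_im, Complex.ofReal_re,
      Complex.ofReal_im, Complex.intCast_im, Complex.intCast_re, Complex.mul_re] at him
    have hLW : L 1 W = (n : ℝ) * (2 * Real.pi) := by simpa using him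
    rw [hLW]
    field_simp
  have hc : ContinuousOn (fun W => L 1 W / (2 * Real.pi)) (SiegelUHP g) :=
    (hcont 1 h1).div_const _
  have hconst := const_of_integer uhp_preconnected hc hint hZ (iE_mem (g := g))
  have hbase1 : L 1 (iE g) = 0 := by
    rw [hbase 1 h1, Jfac_one, Complex.arg_one]
  rw [hbase1] at hconst
  simp only [zero_div] at hconst
  have hpi : (2 * Real.pi) ≠ 0 := by positivity
  field_simp at hconst
  simpa using hconst

end SW

/-- `w` is a 2-cocycle on `Sp(g,ℝ)`:
`w(M₁M₂,M₃) + w(M₁,M₂) = w(M₁,M₂M₃) + w(M₂,M₃)` and `w(E,M) = w(M,E) = 0`. -/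
theorem w_is_cocycle (g : ℕ)
    (L : SpMat g → Matrix (Fin g) (Fin g) ℂ → ℝ) (hL : IsArgBranch g L) :
    (∀ M₁ ∈ Matrix.symplecticGroup (Fin g) ℝ,
     ∀ M₂ ∈ Matrix.symplecticGroup (Fin g) ℝ,
     ∀ M₃ ∈ Matrix.symplecticGroup (Fin g) ℝ,
      wcoc L (M₁ * M₂) M₃ + wcoc L M₁ M₂ = wcoc L M₁ (M₂ * M₃) + wcoc L M₂ M₃) ∧
    (∀ M ∈ Matrix.symplecticGroup (Fin g) ℝ, wcoc L 1 M = 0 ∧ wcoc L M 1 = 0) := by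
  constructor
  · intro M₁ h₁ M₂ h₂ M₃ h₃
    have h12 : M₁ * M₂ ∈ Matrix.symplecticGroup (Fin g) ℝ := mul_mem h₁ h₂
    have hiE := SW.iE_mem (g := g)
    have hW : spAct M₃ (iE g) ∈ SiegelUHP g := SW.spAct_mem h₃ hiE
    have hFcont : ContinuousOn
        (fun Z => (L M₁ (spAct M₂ Z) + L M₂ Z - L (M₁ * M₂) Z) / (2 * Real.pi))
        (SiegelUHP g) := by
      apply ContinuousOn.div_const
      apply ContinuousOn.sub
      · apply ContinuousOn.add
        · exact (hL.1 M₁ h₁).comp (SW.contOn_spAct h₂) (fun Z hZ => SW.spAct_mem h₂ hZ)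
        · exact hL.1 M₂ h₂
      · exact hL.1 _ h12
    have hpi : (2 * Real.pi) ≠ 0 := by positivity
    have hFint : ∀ Z ∈ SiegelUHP g, ∃ n : ℤ,
        (L M₁ (spAct M₂ Z) + L M₂ Z - L (M₁ * M₂) Z) / (2 * Real.pi) = n := by
      intro Z hZ
      obtain ⟨n, hn⟩ := SW.exists_int hL h₁ h₂ hZ
      refine ⟨n, ?_⟩
      rw [hn]
      field_simp
    have hconst := SW.const_of_integer SW.uhp_preconnected hFcont hFint hW hiE
    have hF : L M₁ (spAct M₂ (spAct M₃ (iE g))) + L M₂ (spAct M₃ (iE g))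
          - L (M₁ * M₂) (spAct M₃ (iE g))
        = L M₁ (spAct M₂ (iE g)) + L M₂ (iE g) - L (M₁ * M₂) (iE g) := by
      field_simp at hconst
      linarith
    have hact : spAct (M₂ * M₃) (iE g) = spAct M₂ (spAct M₃ (iE g)) :=
      SW.spAct_mul h₃ hiE
    simp only [wcoc]
    rw [hact, ← mul_assoc]
    rw [← add_div, ← add_div]
    congr 1
    linarith
  · intro M hM
    have hiE := SW.iE_mem (g := g)
    have hMiE := SW.spAct_mem hM hiE
    constructor
    · simp only [wcoc]
      rw [one_mul, SW.L_one_eq_zero hL hMiE]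
      simp
    · simp only [wcoc]
      rw [mul_one, SW.spAct_one, SW.L_one_eq_zero hL hiE]
      simp
end
end
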